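/- Let (μ_n) be positive reals tending to 0 with counting functions M_k(ε) := #{n : μ_n > kε}. Then for all ε > 0, the metric entropy of E_∞ = {x : |x_n| ≤ μ_n ∀n} with respect to the sup-norm satisfies H(ε; E_∞, ‖·‖_∞) = ∑_{k=1}^∞ log(1 + 1/k)·M_k(ε). -/

import Mathlib

open Filter Metric ENNReal

/-- The `ε`-covering number (with centers allowed anywhere in the ambient space),
as an extended natural number. -/
noncomputable def coveringNumber {X : Type*} [PseudoMetricSpace X] (ε : ℝ) (K : Set X) : ℕ∞ :=
  sInf {n : ℕ∞ | ∃ S : Finset X, (S.card : ℕ∞) = n ∧ K ⊆ ⋃ x ∈ S, Metric.closedBall x ε}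

/-- Metric entropy: binary logarithm of the covering number. -/
noncomputable def metricEntropy {X : Type*} [PseudoMetricSpace X] (ε : ℝ) (K : Set X) : ℝ :=
  Real.logb 2 ((coveringNumber ε K).toNat : ℝ)

private lemma coordCover {ε μ0 x : ℝ} (hε : 0 < ε) (hμ : 0 < μ0) (hx : |x| ≤ μ0) :
    ∃ i : ℕ, i < ⌈μ0 / ε⌉₊ ∧ |x - (-μ0 + (2 * i + 1) * ε)| ≤ ε := by
  set m := ⌈μ0 / ε⌉₊ with hm
  have hm1 : 1 ≤ m := Nat.one_le_ceil_iff.mpr (div_pos hμ hε)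
  set i := min ⌊(x + μ0) / (2 * ε)⌋₊ (m - 1) with hi
  refine ⟨i, by omega, ?_⟩
  have hxμ : 0 ≤ x + μ0 := by have := abs_le.mp hx; linarith [this.1]
  have h1 : (i : ℝ) * (2 * ε) ≤ x + μ0 := by
    have h1a : (i : ℝ) ≤ (⌊(x + μ0) / (2 * ε)⌋₊ : ℝ) := by
      exact_mod_cast min_le_left _ _
    have h1b : (⌊(x + μ0) / (2 * ε)⌋₊ : ℝ) ≤ (x + μ0) / (2 * ε) :=
      Nat.floor_le (by positivity)
    have : (i : ℝ) ≤ (x + μ0) / (2 * ε) := h1a.trans h1b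
    calc (i : ℝ) * (2 * ε) ≤ ((x + μ0) / (2 * ε)) * (2 * ε) := by nlinarith
    _ = x + μ0 := by field_simp
  have h2 : x + μ0 ≤ ((i : ℝ) + 1) * (2 * ε) := by
    rcases le_or_gt ⌊(x + μ0) / (2 * ε)⌋₊ (m - 1) with h | h
    · have hieq : i = ⌊(x + μ0) / (2 * ε)⌋₊ := min_eq_left h
      have := Nat.lt_floor_add_one ((x + μ0) / (2 * ε))
      rw [← hieq] at this
      calc x + μ0 = ((x + μ0) / (2 * ε)) * (2 * ε) := by field_simp
      _ ≤ ((i : ℝ) + 1) * (2 * ε) := by nlinarith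
    · have hieq : i = m - 1 := min_eq_right h.le
      have hceil : μ0 / ε ≤ (m : ℝ) := Nat.le_ceil _
      have hμm : μ0 ≤ (m : ℝ) * ε := by
        calc μ0 = (μ0 / ε) * ε := by field_simp
        _ ≤ (m : ℝ) * ε := by nlinarith
      have hcast : ((i : ℝ) + 1) = (m : ℝ) := by
        rw [hieq]; push_cast [hm1]; ring
      rw [hcast]
      have : x ≤ μ0 := (abs_le.mp hx).2
      linarith
  rw [abs_le]; constructor <;> nlinarith

private lemma memℓp_top_of_eventually_zero {f : ℕ → ℝ} (N : ℕ) (h : ∀ n, N ≤ n → f n = 0) :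
    Memℓp f ⊤ := by
  apply memℓp_infty
  have hs : Set.range (fun n => ‖f n‖) ⊆ ↑((Finset.range (N + 1)).image fun n => ‖f n‖) := by
    rintro _ ⟨n, rfl⟩
    simp only [Finset.coe_image, Set.mem_image, Finset.mem_coe, Finset.mem_range]
    by_cases hn : n < N + 1
    · exact ⟨n, hn, rfl⟩
    · exact ⟨N, by omega, by rw [h N le_rfl, h n (by omega)]⟩
  exact (Set.Finite.subset (Finset.finite_toSet _) hs).bddAbove

private lemma coveringNumber_eq (μ : ℕ → ℝ) (hpos : ∀ n, 0 < μ n) (ε : ℝ) (hε : 0 < ε)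
    (N : ℕ) (hN : ∀ n, N ≤ n → μ n ≤ ε) :
    coveringNumber ε {x : lp (fun _ : ℕ => ℝ) ⊤ | ∀ n : ℕ, |(x : ℕ → ℝ) n| ≤ μ n}
      = ((∏ n ∈ Finset.range N, ⌈μ n / ε⌉₊ : ℕ) : ℕ∞) := by
  classical
  set m : ℕ → ℕ := fun n => ⌈μ n / ε⌉₊ with hmdef
  have hm1 : ∀ n, 1 ≤ m n := fun n => Nat.one_le_ceil_iff.mpr (div_pos (hpos n) hε)
  set P : ℕ := ∏ n ∈ Finset.range N, m n with hP
  set E : Set (lp (fun _ : ℕ => ℝ) ⊤) := {x | ∀ n : ℕ, |(x : ℕ → ℝ) n| ≤ μ n} with hEdef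
  set ι := ∀ n : Fin N, Fin (m n) with hι
  have hcardι : Fintype.card ι = P := by
    rw [Fintype.card_pi]
    simp only [Fintype.card_fin]
    exact Fin.prod_univ_eq_prod_range _ _
  apply le_antisymm
  · -- upper bound: exhibit a cover of cardinality ≤ P
    set c : ι → ℕ → ℝ := fun σ n =>
      if h : n < N then -μ n + (2 * ((σ ⟨n, h⟩ : ℕ) : ℝ) + 1) * ε else 0 with hc
    have cmem : ∀ σ, Memℓp (c σ) ⊤ := fun σ =>
      memℓp_top_of_eventually_zero N (fun n hn => by simp [hc, Nat.not_lt.mpr hn])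
    set C : ι → lp (fun _ : ℕ => ℝ) ⊤ := fun σ => ⟨c σ, cmem σ⟩ with hC
    set S : Finset (lp (fun _ : ℕ => ℝ) ⊤) := Finset.image C Finset.univ with hS
    have hcover : E ⊆ ⋃ x ∈ S, Metric.closedBall x ε := by
      intro x hx
      have hex : ∀ n : Fin N, ∃ i : ℕ, i < m (n : ℕ) ∧
          |(x : ℕ → ℝ) n - (-μ n + (2 * i + 1) * ε)| ≤ ε :=
        fun n => coordCover hε (hpos n) (hx n)
      choose g hg1 hg2 using hex
      set σ : ι := fun n => ⟨g n, hg1 n⟩ with hσ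
      refine Set.mem_iUnion₂.mpr ⟨C σ, Finset.mem_image_of_mem C (Finset.mem_univ σ), ?_⟩
      rw [Metric.mem_closedBall, dist_eq_norm]
      apply lp.norm_le_of_forall_le hε.le
      intro n
      have hcoe : ((x - C σ : lp (fun _ : ℕ => ℝ) ⊤) : ℕ → ℝ) n
          = (x : ℕ → ℝ) n - c σ n := by
        rw [lp.coeFn_sub]; rfl
      rw [hcoe]
      by_cases hn : n < N
      · simp only [hc, dif_pos hn]
        have := hg2 ⟨n, hn⟩
        push_cast at this ⊢
        convert this using 3
        rfl
      · simp only [hc, dif_neg hn]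
        simpa using (hx n).trans (hN n (Nat.not_lt.mp hn))
    have hmem : ((S.card : ℕ∞)) ∈ {n : ℕ∞ | ∃ S : Finset (lp (fun _ : ℕ => ℝ) ⊤),
        (S.card : ℕ∞) = n ∧ E ⊆ ⋃ x ∈ S, Metric.closedBall x ε} := ⟨S, rfl, hcover⟩
    refine le_trans (sInf_le hmem) ?_
    have : S.card ≤ P := by
      calc S.card ≤ Finset.univ.card := Finset.card_image_le
      _ = Fintype.card ι := Finset.card_univ
      _ = P := hcardι
    exact_mod_cast this
  · -- lower bound
    apply le_sInf
    rintro a ⟨S, rfl, hcover⟩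
    set q : (n : ℕ) → Fin (m n) → ℝ := fun n i =>
      if m n = 1 then 0 else -μ n + 2 * (i : ℝ) * (μ n / ((m n : ℝ) - 1)) with hq
    have hqmem : ∀ n i, |q n i| ≤ μ n := by
      intro n i
      by_cases h1 : m n = 1
      · simp [hq, h1, (hpos n).le]
      · have h2 : 2 ≤ m n := by have := hm1 n; omega
        have h2' : (1 : ℝ) ≤ (m n : ℝ) - 1 := by
          have : (2 : ℝ) ≤ (m n : ℝ) := by exact_mod_cast h2
          linarith
        have hi : ((i : ℕ) : ℝ) ≤ (m n : ℝ) - 1 := by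
          have : ((i : ℕ) : ℝ) + 1 ≤ (m n : ℝ) := by exact_mod_cast i.isLt
          linarith
        have hd : 0 < μ n / ((m n : ℝ) - 1) := div_pos (hpos n) (by linarith)
        simp only [hq, if_neg h1]
        rw [abs_le]
        constructor
        · nlinarith [(Nat.cast_nonneg (i : ℕ) : (0:ℝ) ≤ ((i:ℕ):ℝ))]
        · have : 2 * ((i:ℕ) : ℝ) * (μ n / ((m n : ℝ) - 1)) ≤ 2 * μ n := by
            rw [div_eq_mul_inv]
            have hinv : 0 < ((m n : ℝ) - 1)⁻¹ := by positivity
            have : 2 * ((i:ℕ) : ℝ) * (μ n * ((m n : ℝ) - 1)⁻¹)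
                ≤ 2 * ((m n : ℝ) - 1) * (μ n * ((m n : ℝ) - 1)⁻¹) := by
              apply mul_le_mul_of_nonneg_right (by linarith) (by positivity)
            calc 2 * ((i:ℕ) : ℝ) * (μ n * ((m n : ℝ) - 1)⁻¹)
                ≤ 2 * ((m n : ℝ) - 1) * (μ n * ((m n : ℝ) - 1)⁻¹) := this
            _ = 2 * μ n := by field_simp
          linarith
    have hqsep : ∀ n (i j : Fin (m n)), i ≠ j → 2 * ε < |q n i - q n j| := by
      intro n i j hij
      have h1 : m n ≠ 1 := by
        intro h; apply hij; have hi := i.isLt; have hj := j.isLt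
        exact Fin.ext (by omega)
      have h2 : 2 ≤ m n := by have := hm1 n; omega
      have h2' : (1 : ℝ) ≤ (m n : ℝ) - 1 := by
        have : (2 : ℝ) ≤ (m n : ℝ) := by exact_mod_cast h2
        linarith
      have hd : ε < μ n / ((m n : ℝ) - 1) := by
        have hceil : (m n : ℝ) < μ n / ε + 1 := Nat.ceil_lt_add_one (le_of_lt (div_pos (hpos n) hε))
        rw [lt_div_iff₀ (by linarith : (0:ℝ) < (m n : ℝ) - 1)]
        have : ((m n : ℝ) - 1) < μ n / ε := by linarith
        calc ε * ((m n : ℝ) - 1) < ε * (μ n / ε) := by nlinarith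
        _ = μ n := by field_simp
      have key : ∀ i j : Fin (m n), (j : ℕ) < (i : ℕ) → 2 * ε < q n i - q n j := by
        intro i j hlt
        have hcast : ((j : ℕ) : ℝ) + 1 ≤ ((i : ℕ) : ℝ) := by exact_mod_cast hlt
        simp only [hq, if_neg h1]
        have : q n i - q n j = 2 * (((i:ℕ):ℝ) - ((j:ℕ):ℝ)) * (μ n / ((m n : ℝ) - 1)) := by
          simp only [hq, if_neg h1]; ring
        nlinarith
      rcases Ne.lt_or_gt hij with h | h
      · rw [abs_sub_comm, abs_of_pos (by linarith [key j i (Fin.lt_iff_val_lt_val.mp h)])]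
        exact key j i (Fin.lt_iff_val_lt_val.mp h)
      · rw [abs_of_pos (by linarith [key i j (Fin.lt_iff_val_lt_val.mp h)])]
        exact key i j (Fin.lt_iff_val_lt_val.mp h)
    set p : ι → ℕ → ℝ := fun σ n => if h : n < N then q n (σ ⟨n, h⟩) else 0 with hp
    have pmem : ∀ σ, Memℓp (p σ) ⊤ := fun σ =>
      memℓp_top_of_eventually_zero N (fun n hn => by simp [hp, Nat.not_lt.mpr hn])
    set pt : ι → lp (fun _ : ℕ => ℝ) ⊤ := fun σ => ⟨p σ, pmem σ⟩ with hpt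
    have hptE : ∀ σ, pt σ ∈ E := by
      intro σ n
      show |p σ n| ≤ μ n
      by_cases hn : n < N
      · simp only [hp, dif_pos hn]; exact hqmem n _
      · simp only [hp, dif_neg hn]; simpa using (hpos n).le
    have hsep : ∀ σ τ : ι, σ ≠ τ → 2 * ε < dist (pt σ) (pt τ) := by
      intro σ τ hne
      obtain ⟨n0, hn0⟩ := Function.ne_iff.mp hne
      have hlb : |p σ (n0 : ℕ) - p τ (n0 : ℕ)| ≤ dist (pt σ) (pt τ) := by
        rw [dist_eq_norm]
        have := lp.norm_apply_le_norm (by simp : (⊤ : ℝ≥0∞) ≠ 0) (pt σ - pt τ) (n0 : ℕ)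
        have hcoe : ((pt σ - pt τ : lp (fun _ : ℕ => ℝ) ⊤) : ℕ → ℝ) (n0 : ℕ)
            = p σ (n0 : ℕ) - p τ (n0 : ℕ) := by rw [lp.coeFn_sub]; rfl
        rwa [hcoe] at this
      have : 2 * ε < |p σ (n0 : ℕ) - p τ (n0 : ℕ)| := by
        simp only [hp, dif_pos n0.isLt]
        have : σ ⟨(n0 : ℕ), n0.isLt⟩ = σ n0 := by congr
        rw [this]
        have : τ ⟨(n0 : ℕ), n0.isLt⟩ = τ n0 := by congr
        rw [this]
        exact hqsep _ _ _ hn0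
      linarith
    have hex : ∀ σ : ι, ∃ c ∈ S, pt σ ∈ Metric.closedBall c ε := by
      intro σ
      have := hcover (hptE σ)
      obtain ⟨c, hcS, hc⟩ := Set.mem_iUnion₂.mp this
      exact ⟨c, hcS, hc⟩
    choose f hf1 hf2 using hex
    have hinj : ∀ σ τ : ι, f σ = f τ → σ = τ := by
      intro σ τ hfeq
      by_contra hne
      have h1 : dist (pt σ) (pt τ) ≤ dist (pt σ) (f σ) + dist (f τ) (pt τ) := by
        rw [hfeq]; exact dist_triangle _ _ _
      have h2 : dist (pt σ) (f σ) ≤ ε := Metric.mem_closedBall.mp (hf2 σ)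
      have h3 : dist (f τ) (pt τ) ≤ ε := by
        rw [dist_comm]; exact Metric.mem_closedBall.mp (hf2 τ)
      have := hsep σ τ hne
      linarith
    have : P ≤ S.card := by
      calc P = Fintype.card ι := hcardι.symm
      _ = Finset.univ.card := Finset.card_univ.symm
      _ ≤ S.card := Finset.card_le_card_of_injOn f (fun σ _ => hf1 σ)
          (fun σ _ τ _ h => hinj σ τ h)
    exact_mod_cast this

theorem stmt11 (μ : ℕ → ℝ) (hpos : ∀ n, 0 < μ n) (hlim : Tendsto μ atTop (nhds 0))
    (ε : ℝ) (hε : 0 < ε) :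
    metricEntropy ε {x : lp (fun _ : ℕ => ℝ) ⊤ | ∀ n : ℕ, |(x : ℕ → ℝ) n| ≤ μ n}
      = ∑' k : ℕ, Real.logb 2 (1 + 1 / ((k : ℝ) + 1)) *
          (Nat.card {n : ℕ | ((k : ℝ) + 1) * ε < μ n} : ℝ) := by
  classical
  obtain ⟨N, hN⟩ := eventually_atTop.mp
    ((hlim.eventually_lt_const hε).mono fun n h => le_of_lt h)
  set m : ℕ → ℕ := fun n => ⌈μ n / ε⌉₊ with hmdef
  have hm1 : ∀ n, 1 ≤ m n := fun n => Nat.one_le_ceil_iff.mpr (div_pos (hpos n) hε)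
  set P : ℕ := ∏ n ∈ Finset.range N, m n with hP
  have hcov := coveringNumber_eq μ hpos ε hε N hN
  have hLHS : metricEntropy ε {x : lp (fun _ : ℕ => ℝ) ⊤ | ∀ n : ℕ, |(x : ℕ → ℝ) n| ≤ μ n}
      = Real.logb 2 (P : ℝ) := by
    rw [metricEntropy, hcov]
    simp only [ENat.toNat_coe]
    rfl
  rw [hLHS]
  -- rewrite the Nat.card terms
  have hMset : ∀ k : ℕ, {n : ℕ | ((k : ℝ) + 1) * ε < μ n}
      = ↑((Finset.range N).filter fun n => k + 1 < m n) := by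
    intro k
    ext n
    simp only [Set.mem_setOf_eq, Finset.coe_filter, Finset.mem_range, Set.mem_setOf_eq]
    constructor
    · intro h
      have h1 : (k : ℝ) + 1 < μ n / ε := by
        rw [lt_div_iff₀ hε]; linarith
      have h2 : k + 1 < m n := Nat.lt_ceil.mpr (by push_cast; linarith)
      refine ⟨?_, h2⟩
      by_contra hn
      have := hN n (Nat.not_lt.mp hn)
      have hk1 : ε ≤ ((k : ℝ) + 1) * ε := by nlinarith [(Nat.cast_nonneg k : (0:ℝ) ≤ (k:ℝ))]
      linarith
    · rintro ⟨-, h2⟩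
      have : ((k : ℝ) + 1) < μ n / ε := by
        have := Nat.lt_ceil.mp h2
        push_cast at this; linarith
      rw [lt_div_iff₀ hε] at this
      linarith
  have hM : ∀ k : ℕ, (Nat.card {n : ℕ | ((k : ℝ) + 1) * ε < μ n} : ℝ)
      = (((Finset.range N).filter fun n => k + 1 < m n).card : ℝ) := by
    intro k
    rw [hMset k, Nat.card_coe_set_eq, Set.ncard_coe_finset]
  set B : ℕ := (Finset.range N).sup m with hB
  have hmB : ∀ n ∈ Finset.range N, m n ≤ B := fun n hn => Finset.le_sup hn
  have hvanish : ∀ k ∉ Finset.range B,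
      Real.logb 2 (1 + 1 / ((k : ℝ) + 1)) * (Nat.card {n : ℕ | ((k : ℝ) + 1) * ε < μ n} : ℝ) = 0 := by
    intro k hk
    rw [Finset.mem_range, not_lt] at hk
    rw [hM k]
    have : (Finset.range N).filter (fun n => k + 1 < m n) = ∅ := by
      apply Finset.filter_eq_empty_iff.mpr
      intro n hn
      have := hmB n hn
      omega
    rw [this]
    simp
  rw [tsum_eq_sum hvanish]
  -- turn each term into a double sum and swap
  have hterm : ∀ k ∈ Finset.range B,
      Real.logb 2 (1 + 1 / ((k : ℝ) + 1)) * (Nat.card {n : ℕ | ((k : ℝ) + 1) * ε < μ n} : ℝ)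
      = ∑ n ∈ Finset.range N,
          (if k + 1 < m n then Real.logb 2 (1 + 1 / ((k : ℝ) + 1)) else 0) := by
    intro k _
    rw [hM k, ← Finset.sum_filter, Finset.sum_const, nsmul_eq_mul, mul_comm]
  rw [Finset.sum_congr rfl hterm, Finset.sum_comm]
  have hinner : ∀ n ∈ Finset.range N,
      (∑ k ∈ Finset.range B, if k + 1 < m n then Real.logb 2 (1 + 1 / ((k : ℝ) + 1)) else 0)
      = Real.logb 2 ((m n : ℝ)) := by
    intro n hn
    rw [← Finset.sum_filter]
    have hfe : (Finset.range B).filter (fun k => k + 1 < m n) = Finset.range (m n - 1) := by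
      ext k
      simp only [Finset.mem_filter, Finset.mem_range]
      have := hmB n hn
      omega
    rw [hfe]
    have hck : ∀ k : ℕ, Real.logb 2 (1 + 1 / ((k : ℝ) + 1))
        = Real.logb 2 (((k + 1 : ℕ) : ℝ) + 1) - Real.logb 2 (((k : ℕ) : ℝ) + 1) := by
      intro k
      have h1 : (0:ℝ) < (k : ℝ) + 1 := by positivity
      have h2 : (1 : ℝ) + 1 / ((k : ℝ) + 1) = (((k:ℝ) + 1) + 1) / ((k : ℝ) + 1) := by
        field_simp
      rw [h2, Real.logb_div (by positivity) (by positivity)]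
      push_cast
      ring_nf
    rw [Finset.sum_congr rfl (fun k _ => hck k), Finset.sum_range_sub
      (fun j : ℕ => Real.logb 2 ((j : ℝ) + 1))]
    have h0 : Real.logb 2 (((0:ℕ) : ℝ) + 1) = 0 := by norm_num
    rw [h0, sub_zero]
    congr 1
    have := hm1 n
    push_cast [Nat.cast_sub this]
    ring
  rw [Finset.sum_congr rfl hinner]
  rw [← Real.logb_prod _ _ (fun n _ => by
    have := hm1 n; positivity)]
  congr 1
  rw [hP]
  push_cast
  rfl
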